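/- Let a : Fin N → ℝ be a cyclic orthonormal generator in ℝ^N and let θ : Fin N → ℝ satisfy cos θ_n = C_n and sin θ_n = S_n for every n ∈ Fin N. Then for every n ∈ Fin N with n ≠ 0, θ_n + θ_{−n} ≡ π/2 (mod 2π), where −n denotes negation in Fin N; that is, there exists an integer m with θ_n + θ_{−n} = π/2 + 2πm. -/

import Mathlib

open Real

theorem cog_theta_add_theta_neg_congr (N : ℕ) (hN : 2 ≤ N) [NeZero N] (a : Fin N → ℝ)
    (ha : ∀ s : Fin N, (∑ j : Fin N, a j * a (j + s)) = if s = 0 then 1 else 0)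
    (θ : Fin N → ℝ)
    (hcos : ∀ n : Fin N, Real.cos (θ n) =
      ∑ j : Fin N, a j * Real.cos (π / 4 - (2 * π * (n : ℕ) / N) * (j : ℕ)))
    (hsin : ∀ n : Fin N, Real.sin (θ n) =
      ∑ j : Fin N, a j * Real.sin (π / 4 - (2 * π * (n : ℕ) / N) * (j : ℕ))) :
    ∀ n : Fin N, n ≠ 0 → ∃ m : ℤ, θ n + θ (-n) = π / 2 + 2 * π * m := by
  intro n hn
  have hNpos : 0 < N := Nat.pos_of_ne_zero (NeZero.ne N)
  have hNR : (N : ℝ) ≠ 0 := Nat.cast_ne_zero.mpr (NeZero.ne N)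
  have hωN : (2 * π * (n : ℕ) / N) * N = 2 * π * (n : ℕ) := by field_simp
  have hnlt : (n : ℕ) < N := n.isLt
  have hnne : (n : ℕ) ≠ 0 := by intro h; apply hn; ext; simp [h]
  have hneg : (((-n) : Fin N) : ℕ) = N - (n : ℕ) := by
    rw [Fin.coe_neg, Nat.mod_eq_of_lt (by omega)]
  -- key reindexing lemma
  have key : ∀ g : ℝ → ℝ, (∀ x : ℝ, ∀ k : ℤ, g (x + k * (2 * π)) = g x) →
      (∑ j : Fin N, ∑ k : Fin N,
        a j * a k * g ((2 * π * (n : ℕ) / N) * (k : ℕ) - (2 * π * (n : ℕ) / N) * (j : ℕ))) = g 0 := by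
    intro g hg
    have step1 : ∀ j : Fin N, (∑ k : Fin N,
        a j * a k * g ((2 * π * (n : ℕ) / N) * (k : ℕ) - (2 * π * (n : ℕ) / N) * (j : ℕ)))
        = ∑ s : Fin N, a j * a (j + s) * g ((2 * π * (n : ℕ) / N) * (s : ℕ)) := by
      intro j
      rw [← Equiv.sum_comp (Equiv.addLeft j)
        (fun k : Fin N => a j * a k * g ((2 * π * (n : ℕ) / N) * (k : ℕ) - (2 * π * (n : ℕ) / N) * (j : ℕ)))]
      refine Finset.sum_congr rfl fun s _ => ?_
      set q : ℕ := ((j : ℕ) + (s : ℕ)) / N with hq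
      have hval : ((j + s : Fin N) : ℕ) = ((j : ℕ) + (s : ℕ)) % N := rfl
      have hdecomp : (((j + s : Fin N) : ℕ) : ℝ)
          = (j : ℕ) + (s : ℕ) - N * (q : ℝ) := by
        have h := Nat.div_add_mod ((j : ℕ) + (s : ℕ)) N
        have h' : ((N : ℝ)) * (q : ℝ) + ((((j : ℕ) + (s : ℕ)) % N : ℕ) : ℝ)
            = ((j : ℕ) : ℝ) + ((s : ℕ) : ℝ) := by
          rw [hq]; exact_mod_cast congrArg (Nat.cast : ℕ → ℝ) h
        rw [hval]
        linarith [h']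
      have harg : (2 * π * (n : ℕ) / N) * (((j + s : Fin N) : ℕ) : ℝ) - (2 * π * (n : ℕ) / N) * (j : ℕ)
          = (2 * π * (n : ℕ) / N) * (s : ℕ)
            + ((-(((n : ℕ) : ℤ) * (q : ℤ)) : ℤ) : ℝ) * (2 * π) := by
        rw [hdecomp]
        push_cast
        linear_combination (-(q : ℝ)) * hωN
      simp only [Equiv.coe_addLeft]
      rw [harg, hg]
    simp_rw [step1]
    rw [Finset.sum_comm]
    have hfac : ∀ s : Fin N, (∑ j : Fin N, a j * a (j + s) * g ((2 * π * (n : ℕ) / N) * (s : ℕ)))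
        = (if s = 0 then 1 else 0) * g ((2 * π * (n : ℕ) / N) * (s : ℕ)) := by
      intro s
      rw [← Finset.sum_mul, ha s]
    simp_rw [hfac]
    rw [Finset.sum_eq_single 0]
    · simp
    · intro s _ hs; simp [hs]
    · simp
  -- the two trig sums
  have hAB : ∀ j k : Fin N, (π / 4 - (2 * π * (n : ℕ) / N) * (j : ℕ))
        + (π / 4 - (2 * π * ((((-n) : Fin N) : ℕ) : ℝ) / N) * (k : ℕ))
        = (π / 2 + ((2 * π * (n : ℕ) / N) * (k : ℕ) - (2 * π * (n : ℕ) / N) * (j : ℕ)))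
          + ((-(k : ℕ) : ℤ) : ℝ) * (2 * π) := by
    intro j k
    rw [hneg]
    push_cast [Nat.cast_sub hnlt.le]
    field_simp
    ring
  have hccss : Real.cos (θ n + θ (-n)) =
      ∑ j : Fin N, ∑ k : Fin N, a j * a k *
        Real.cos (π / 2 + ((2 * π * (n : ℕ) / N) * (k : ℕ) - (2 * π * (n : ℕ) / N) * (j : ℕ))) := by
    rw [Real.cos_add, hcos n, hcos (-n), hsin n, hsin (-n), Finset.sum_mul_sum,
      Finset.sum_mul_sum, ← Finset.sum_sub_distrib]
    refine Finset.sum_congr rfl fun j _ => ?_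
    rw [← Finset.sum_sub_distrib]
    refine Finset.sum_congr rfl fun k _ => ?_
    have := Real.cos_add_int_mul_two_pi
      (π / 2 + ((2 * π * (n : ℕ) / N) * (k : ℕ) - (2 * π * (n : ℕ) / N) * (j : ℕ))) (-(k : ℕ) : ℤ)
    rw [← this, ← hAB j k, Real.cos_add]
    ring
  have hscs : Real.sin (θ n + θ (-n)) =
      ∑ j : Fin N, ∑ k : Fin N, a j * a k *
        Real.sin (π / 2 + ((2 * π * (n : ℕ) / N) * (k : ℕ) - (2 * π * (n : ℕ) / N) * (j : ℕ))) := by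
    rw [Real.sin_add, hcos n, hcos (-n), hsin n, hsin (-n), Finset.sum_mul_sum,
      Finset.sum_mul_sum, ← Finset.sum_add_distrib]
    refine Finset.sum_congr rfl fun j _ => ?_
    rw [← Finset.sum_add_distrib]
    refine Finset.sum_congr rfl fun k _ => ?_
    have := Real.sin_add_int_mul_two_pi
      (π / 2 + ((2 * π * (n : ℕ) / N) * (k : ℕ) - (2 * π * (n : ℕ) / N) * (j : ℕ))) (-(k : ℕ) : ℤ)
    rw [← this, ← hAB j k, Real.sin_add]
    ring
  have hc0 : Real.cos (θ n + θ (-n)) = 0 := by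
    rw [hccss]
    have := key (fun x => Real.cos (π / 2 + x)) (fun x k => by
      show Real.cos (π / 2 + (x + k * (2 * π))) = Real.cos (π / 2 + x)
      rw [← add_assoc, Real.cos_add_int_mul_two_pi])
    simpa using this
  have hs1 : Real.sin (θ n + θ (-n)) = 1 := by
    rw [hscs]
    have := key (fun x => Real.sin (π / 2 + x)) (fun x k => by
      show Real.sin (π / 2 + (x + k * (2 * π))) = Real.sin (π / 2 + x)
      rw [← add_assoc, Real.sin_add_int_mul_two_pi])
    simpa using this
  have h1 : Real.cos (θ n + θ (-n) - π / 2) = 1 := by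
    rw [Real.cos_sub, hc0, hs1]
    simp
  obtain ⟨m, hm⟩ := (Real.cos_eq_one_iff _).mp h1
  exact ⟨m, by linarith [hm]⟩
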